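/- Let Σ ⊂ ℝ^d = ℝ^{d−1} × ℝ be a cylindric set with base Π ⊂ ℝ^{d−1} of positive Lebesgue measure, and let Γ ⊂ ℝ^{d−1} be a countable set such that E(Γ) is a Riesz basis in L²(Π). Then there exists a constant M = M(Π, Γ) such that for every family of scalars (c(γ,n))_{(γ,n) ∈ Γ × ℤ} with only finitely many nonzero elements, ∑_{(γ,n)} |c(γ,n)|² ≤ M ‖∑_{(γ,n)} c(γ,n) e_{(γ,n)}‖²_{L²(Σ)}, where e_{(γ,n)}(x,y) = e^{2πi⟨γ,x⟩} e^{2πi n y}. -/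

import Mathlib

open MeasureTheory Complex
open scoped RealInnerProductSpace Pointwise

noncomputable section

/-- A family of vectors in a Hilbert space is a *Riesz basis* if it is the image of an
orthonormal (Hilbert) basis under a bounded invertible linear operator. -/
def IsRieszBasis {H : Type*} [NormedAddCommGroup H] [InnerProductSpace ℂ H] {ι : Type*}
    (f : ι → H) : Prop :=
  ∃ (e : HilbertBasis ι ℂ H) (T : H ≃L[ℂ] H), ∀ i, f i = T (e i)

/-- The exponential function `e_λ(x) = e^{2πi⟨λ,x⟩}` on `ℝ^d`. -/
def expFun {d : ℕ} (l : EuclideanSpace ℝ (Fin d)) : EuclideanSpace ℝ (Fin d) → ℂ :=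
  fun x => Complex.exp (2 * Real.pi * Complex.I * ((⟪ l, x ⟫ : ℝ) : ℂ))

open scoped Classical in
/-- The exponential `e_λ` regarded as an element of `L²(Ω)`. -/
def expLp {d : ℕ} (Ω : Set (EuclideanSpace ℝ (Fin d))) (l : EuclideanSpace ℝ (Fin d)) :
    Lp ℂ 2 (volume.restrict Ω) :=
  if h : MemLp (expFun l) 2 (volume.restrict Ω) then h.toLp _ else 0

/-- A cylindric set `S ⊆ ℝ^{m} × ℝ` with base `B ⊆ ℝ^{m}`: over every point of the
bounded measurable base `B`, the fiber of `S` is an interval `[φ x, φ x + 1]` of length one,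
where `φ` is a bounded measurable function on `B`. -/
def IsCylindric {m : ℕ} (S : Set (EuclideanSpace ℝ (Fin m) × ℝ))
    (B : Set (EuclideanSpace ℝ (Fin m))) : Prop :=
  Bornology.IsBounded S ∧ MeasurableSet S ∧ Bornology.IsBounded B ∧ MeasurableSet B ∧
    ∃ φ : EuclideanSpace ℝ (Fin m) → ℝ, Measurable φ ∧ (∃ C : ℝ, ∀ x ∈ B, |φ x| ≤ C) ∧
      S = {p | p.1 ∈ B ∧ φ p.1 ≤ p.2 ∧ p.2 ≤ φ p.1 + 1}

open scoped Classical in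
/-- The exponential `e_{(γ,n)}(x,y) = e^{2πi⟨γ,x⟩} e^{2πiny}` as an element of `L²(S)`,
for `S ⊆ ℝ^{m} × ℝ`. -/
def expLpProd {m : ℕ} (S : Set (EuclideanSpace ℝ (Fin m) × ℝ))
    (γ : EuclideanSpace ℝ (Fin m)) (n : ℤ) : Lp ℂ 2 (volume.restrict S) :=
  if h : MemLp (fun p : EuclideanSpace ℝ (Fin m) × ℝ =>
      Complex.exp (2 * Real.pi * Complex.I * (((⟪ γ, p.1 ⟫ : ℝ) + (n : ℝ) * p.2 : ℝ) : ℂ)))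
      2 (volume.restrict S)
  then h.toLp _ else 0


section helpers

lemma norm_exp_real_mul_I (r : ℝ) : ‖Complex.exp (2 * Real.pi * Complex.I * (r : ℂ))‖ = 1 := by
  rw [Complex.norm_exp]
  have : (2 * Real.pi * Complex.I * (r : ℂ)).re = 0 := by simp [Complex.mul_re]
  rw [this, Real.exp_zero]

lemma memLp_of_norm_one {α : Type*} [MeasurableSpace α] [TopologicalSpace α]
    [OpensMeasurableSpace α]
    {μ : Measure α} [IsFiniteMeasure μ] {f : α → ℂ}
    (hf : Continuous f) (h1 : ∀ x, ‖f x‖ = 1) : MemLp f 2 μ :=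
  MemLp.of_bound hf.aestronglyMeasurable 1 (Filter.Eventually.of_forall fun x => (h1 x).le)

lemma inner_toLp' {α : Type*} [MeasurableSpace α] {μ : Measure α} {f g : α → ℂ}
    (hf : MemLp f 2 μ) (hg : MemLp g 2 μ) :
    (inner ℂ (hf.toLp f) (hg.toLp g) : ℂ) = ∫ a, (starRingEnd ℂ) (f a) * g a ∂μ := by
  rw [MeasureTheory.L2.inner_def]
  refine integral_congr_ae ?_
  filter_upwards [hf.coeFn_toLp, hg.coeFn_toLp] with a ha hb
  rw [ha, hb, RCLike.inner_apply']

lemma continuous_expFun {d : ℕ} (l : EuclideanSpace ℝ (Fin d)) : Continuous (expFun l) := by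
  apply Complex.continuous_exp.comp
  exact continuous_const.mul (Complex.continuous_ofReal.comp
    (Continuous.inner continuous_const continuous_id))

lemma memLp_expFun {d : ℕ} {B : Set (EuclideanSpace ℝ (Fin d))} (hBb : Bornology.IsBounded B)
    (l : EuclideanSpace ℝ (Fin d)) : MemLp (expFun l) 2 (volume.restrict B) := by
  haveI : Fact (volume B < ⊤) := ⟨hBb.measure_lt_top⟩
  exact memLp_of_norm_one (continuous_expFun l) (fun x => norm_exp_real_mul_I _)

lemma memLp_efn {m : ℕ} {S : Set (EuclideanSpace ℝ (Fin m) × ℝ)}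
    (hSb : Bornology.IsBounded S) (γ : EuclideanSpace ℝ (Fin m)) (n : ℤ) :
    MemLp (fun p : EuclideanSpace ℝ (Fin m) × ℝ =>
      Complex.exp (2 * Real.pi * Complex.I * (((⟪ γ, p.1 ⟫ : ℝ) + (n : ℝ) * p.2 : ℝ) : ℂ)))
      2 (volume.restrict S) := by
  haveI : Fact (volume S < ⊤) := ⟨hSb.measure_lt_top⟩
  refine memLp_of_norm_one ?_ (fun x => norm_exp_real_mul_I _)
  apply Complex.continuous_exp.comp
  refine continuous_const.mul (Complex.continuous_ofReal.comp ?_)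
  exact (Continuous.inner continuous_const continuous_fst).add
    (continuous_const.mul continuous_snd)

lemma integral_exp_int (k : ℤ) (a : ℝ) :
    (∫ y in Set.Icc a (a + 1), Complex.exp (2 * Real.pi * Complex.I * ((k : ℝ) * y : ℝ))) =
      if k = 0 then 1 else 0 := by
  have hle : a ≤ a + 1 := by linarith
  rw [MeasureTheory.integral_Icc_eq_integral_Ioc, ← intervalIntegral.integral_of_le hle]
  by_cases hk : k = 0
  · simp [hk]
  · have hc : (2 * Real.pi * Complex.I * (k : ℂ)) ≠ 0 := by
      simp [Real.pi_ne_zero, Complex.I_ne_zero, hk]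
    have heq : ∀ y : ℝ, Complex.exp (2 * Real.pi * Complex.I * ((k : ℝ) * y : ℝ)) =
        Complex.exp ((2 * Real.pi * Complex.I * (k : ℂ)) * (y : ℂ)) := by
      intro y; push_cast; ring_nf
    simp_rw [heq]
    rw [integral_exp_mul_complex hc, if_neg hk]
    have : Complex.exp (2 * Real.pi * Complex.I * (k : ℂ) * ((a : ℂ) + 1)) =
        Complex.exp (2 * Real.pi * Complex.I * (k : ℂ) * (a : ℂ)) := by
      rw [mul_add, Complex.exp_add, mul_one]
      have h1 : (2 : ℂ) * Real.pi * Complex.I * (k : ℂ) = (k : ℂ) * (2 * Real.pi * Complex.I) := by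
        ring
      rw [h1, Complex.exp_int_mul_two_pi_mul_I, mul_one]
    push_cast
    rw [this, sub_self, zero_div]

lemma integral_over_cyl {m : ℕ} {S : Set (EuclideanSpace ℝ (Fin m) × ℝ)}
    {B : Set (EuclideanSpace ℝ (Fin m))} {φ : EuclideanSpace ℝ (Fin m) → ℝ}
    (hSb : Bornology.IsBounded S) (hSm : MeasurableSet S) (hBm : MeasurableSet B)
    (hS : S = {p | p.1 ∈ B ∧ φ p.1 ≤ p.2 ∧ p.2 ≤ φ p.1 + 1})
    (h : EuclideanSpace ℝ (Fin m) → ℂ) (hh : Continuous h) (hh1 : ∀ x, ‖h x‖ = 1) (k : ℤ) :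
    (∫ p in S, h p.1 * Complex.exp (2 * Real.pi * Complex.I * ((k : ℝ) * p.2 : ℝ)) ∂volume)
      = if k = 0 then ∫ x in B, h x ∂volume else 0 := by
  classical
  set F : EuclideanSpace ℝ (Fin m) × ℝ → ℂ :=
    fun p => h p.1 * Complex.exp (2 * Real.pi * Complex.I * ((k : ℝ) * p.2 : ℝ)) with hF
  have hFc : Continuous F := by
    apply (hh.comp continuous_fst).mul
    apply Complex.continuous_exp.comp
    exact continuous_const.mul (Complex.continuous_ofReal.comp
      (continuous_const.mul continuous_snd))
  have hF1 : ∀ p, ‖F p‖ = 1 := by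
    intro p
    rw [hF]
    simp only [norm_mul, hh1]
    rw [Complex.norm_exp]
    have : (2 * Real.pi * Complex.I * (((k : ℝ) * p.2 : ℝ) : ℂ)).re = 0 := by
      simp [Complex.mul_re]
    rw [this, Real.exp_zero, one_mul]
  haveI : Fact (volume S < ⊤) := ⟨hSb.measure_lt_top⟩
  have hmem : MemLp F 2 (volume.restrict S) := memLp_of_norm_one hFc hF1
  have hInt : Integrable (S.indicator F) volume :=
    (integrable_indicator_iff hSm).2 (hmem.integrable one_le_two)
  rw [← MeasureTheory.integral_indicator hSm]
  rw [MeasureTheory.Measure.volume_eq_prod] at hInt ⊢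
  rw [MeasureTheory.integral_prod _ hInt]
  have hinner : ∀ x, (∫ y, S.indicator F (x, y)) =
      if x ∈ B then (h x * if k = 0 then 1 else 0) else 0 := by
    intro x
    by_cases hx : x ∈ B
    · have heq : (fun y => S.indicator F (x, y)) =
          (Set.Icc (φ x) (φ x + 1)).indicator (fun y => F (x, y)) := by
        funext y
        have hmemiff : ((x, y) ∈ S) ↔ y ∈ Set.Icc (φ x) (φ x + 1) := by
          simp [hS, hx, Set.mem_Icc]
        rw [Set.indicator_apply, Set.indicator_apply, if_congr hmemiff rfl rfl]
      rw [heq, MeasureTheory.integral_indicator measurableSet_Icc]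
      simp only [hF]
      rw [MeasureTheory.integral_const_mul, integral_exp_int k (φ x)]
      simp [hx]
    · have heq : (fun y => S.indicator F (x, y)) = fun _ => 0 := by
        funext y
        simp [hS, Set.indicator_apply, hx]
      rw [heq, integral_zero, if_neg hx]
  simp_rw [hinner]
  by_cases hk : k = 0
  · have : (fun x => if x ∈ B then (h x * if k = 0 then 1 else 0) else 0) = B.indicator h := by
      funext x; simp [Set.indicator_apply, hk]
    rw [this, MeasureTheory.integral_indicator hBm, if_pos hk]
  · have : (fun x => if x ∈ B then (h x * if k = 0 then 1 else 0) else 0) = fun _ => 0 := by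
      funext x; simp [hk]
    rw [this, integral_zero, if_neg hk]

lemma inner_expLpProd {m : ℕ} {S : Set (EuclideanSpace ℝ (Fin m) × ℝ)}
    {B : Set (EuclideanSpace ℝ (Fin m))} (hcyl : IsCylindric S B)
    (γ γ' : EuclideanSpace ℝ (Fin m)) (n n' : ℤ) :
    (inner ℂ (expLpProd S γ n) (expLpProd S γ' n') : ℂ) =
      if n = n' then (inner ℂ (expLp B γ) (expLp B γ') : ℂ) else 0 := by
  obtain ⟨hSb, hSm, hBb, hBm, φ, hφm, -, hS⟩ := hcyl
  rw [expLpProd, expLpProd, dif_pos (memLp_efn hSb γ n), dif_pos (memLp_efn hSb γ' n'),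
    inner_toLp', expLp, expLp, dif_pos (memLp_expFun hBb γ), dif_pos (memLp_expFun hBb γ'),
    inner_toLp']
  set h : EuclideanSpace ℝ (Fin m) → ℂ := fun x =>
    Complex.exp (2 * Real.pi * Complex.I * (((⟪ γ', x ⟫ : ℝ) - (⟪ γ, x ⟫ : ℝ) : ℝ) : ℂ)) with hh
  have hhc : Continuous h := by
    apply Complex.continuous_exp.comp
    refine continuous_const.mul (Complex.continuous_ofReal.comp ?_)
    exact (Continuous.inner continuous_const continuous_id).sub
      (Continuous.inner continuous_const continuous_id)
  have hh1 : ∀ x, ‖h x‖ = 1 := fun x => norm_exp_real_mul_I _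
  have key : ∀ p : EuclideanSpace ℝ (Fin m) × ℝ,
      (starRingEnd ℂ) (Complex.exp (2 * Real.pi * Complex.I *
          (((⟪ γ, p.1 ⟫ : ℝ) + (n : ℝ) * p.2 : ℝ) : ℂ))) *
        Complex.exp (2 * Real.pi * Complex.I *
          (((⟪ γ', p.1 ⟫ : ℝ) + (n' : ℝ) * p.2 : ℝ) : ℂ)) =
      h p.1 * Complex.exp (2 * Real.pi * Complex.I * ((((n' - n : ℤ) : ℝ) * p.2 : ℝ) : ℂ)) := by
    intro p
    rw [hh]
    rw [← Complex.exp_conj, ← Complex.exp_add, ← Complex.exp_add]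
    congr 1
    simp only [map_mul, Complex.conj_I, Complex.conj_ofReal, map_ofNat]
    push_cast
    ring
  simp_rw [key]
  rw [integral_over_cyl hSb hSm hBm hS h hhc hh1 (n' - n)]
  have hiff : (n' - n = 0) ↔ (n = n') := by omega
  rw [if_congr hiff rfl rfl]
  have key2 : ∀ x, (starRingEnd ℂ) (expFun γ x) * expFun γ' x = h x := by
    intro x
    rw [hh, expFun, expFun]
    rw [← Complex.exp_conj, ← Complex.exp_add]
    congr 1
    simp only [map_mul, Complex.conj_I, Complex.conj_ofReal, map_ofNat]
    push_cast
    ring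
  simp_rw [key2]

lemma inner_self_complex {H : Type*} [NormedAddCommGroup H] [InnerProductSpace ℂ H] (x : H) :
    (inner ℂ x x : ℂ) = ((‖x‖ ^ 2 : ℝ) : ℂ) := by
  rw [inner_self_eq_norm_sq_to_K]; norm_cast

lemma norm_sq_eq_of_inner_eq {H : Type*} [NormedAddCommGroup H] [InnerProductSpace ℂ H]
    {x : H} {r : ℝ} (h : (inner ℂ x x : ℂ) = (r : ℂ)) : ‖x‖ ^ 2 = r := by
  rw [← inner_self_eq_norm_sq (𝕜 := ℂ), h]
  simp

lemma riesz_lower {H : Type*} [NormedAddCommGroup H] [InnerProductSpace ℂ H] {ι : Type*}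
    {f : ι → H} (hb : IsRieszBasis f) :
    ∃ A : ℝ, ∀ (s : Finset ι) (a : ι → ℂ),
      ∑ i ∈ s, ‖a i‖ ^ 2 ≤ A * ‖∑ i ∈ s, a i • f i‖ ^ 2 := by
  obtain ⟨e, T, hT⟩ := hb
  refine ⟨‖(T.symm : H →L[ℂ] H)‖ ^ 2, fun s a => ?_⟩
  set v := ∑ i ∈ s, a i • (e i : H) with hv
  have h1 : ‖v‖ ^ 2 = ∑ i ∈ s, ‖a i‖ ^ 2 := by
    apply norm_sq_eq_of_inner_eq
    rw [e.orthonormal.inner_sum a a s]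
    push_cast
    exact Finset.sum_congr rfl fun i _ => RCLike.conj_mul (a i)
  have hTv : ∑ i ∈ s, a i • f i = T v := by
    rw [hv, map_sum]
    exact Finset.sum_congr rfl fun i _ => by
      rw [hT]; exact (_root_.map_smul T.toContinuousLinearMap (a i) _).symm
  have hnorm : ‖v‖ ≤ ‖(T.symm : H →L[ℂ] H)‖ * ‖T v‖ := by
    have h2 := (T.symm : H →L[ℂ] H).le_opNorm (T v)
    simpa using h2
  calc ∑ i ∈ s, ‖a i‖ ^ 2 = ‖v‖ ^ 2 := h1.symm
    _ ≤ (‖(T.symm : H →L[ℂ] H)‖ * ‖T v‖) ^ 2 := by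
        apply pow_le_pow_left₀ (norm_nonneg v) hnorm
    _ = ‖(T.symm : H →L[ℂ] H)‖ ^ 2 * ‖T v‖ ^ 2 := by ring
    _ = ‖(T.symm : H →L[ℂ] H)‖ ^ 2 * ‖∑ i ∈ s, a i • f i‖ ^ 2 := by rw [hTv]

end helpers

theorem cylindric_interpolation_bound
    (m : ℕ) (S : Set (EuclideanSpace ℝ (Fin m) × ℝ)) (B : Set (EuclideanSpace ℝ (Fin m)))
    (hcyl : IsCylindric S B) (hB : 0 < volume B)
    (Γ : Set (EuclideanSpace ℝ (Fin m))) (hΓ : Γ.Countable)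
    (hbasis : IsRieszBasis (fun γ : Γ => expLp B (γ : EuclideanSpace ℝ (Fin m)))) :
    ∃ M : ℝ, ∀ (c : Γ × ℤ → ℂ) (hc : (Function.support c).Finite),
      ∑ q ∈ hc.toFinset, ‖c q‖ ^ 2 ≤
        M * ‖∑ q ∈ hc.toFinset, c q • expLpProd S (q.1 : EuclideanSpace ℝ (Fin m)) q.2‖ ^ 2 := by
  classical
  obtain ⟨A, hA⟩ := riesz_lower hbasis
  refine ⟨A, fun c hc => ?_⟩
  set sΓ : Finset Γ := hc.toFinset.image Prod.fst with hsΓ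
  set sN : Finset ℤ := hc.toFinset.image Prod.snd with hsN
  have hsub : hc.toFinset ⊆ sΓ ×ˢ sN := by
    intro q hq
    rw [Finset.mem_product]
    exact ⟨Finset.mem_image_of_mem _ hq, Finset.mem_image_of_mem _ hq⟩
  have hzero : ∀ q ∈ sΓ ×ˢ sN, q ∉ hc.toFinset → c q = 0 := by
    intro q _ hq
    by_contra hne
    exact hq (hc.mem_toFinset.2 hne)
  rw [Finset.sum_subset hsub (fun q hq hq' => by simp [hzero q hq hq']),
    Finset.sum_subset hsub (fun q hq hq' => by simp [hzero q hq hq'])]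
  set v : ℤ → Lp ℂ 2 (volume.restrict B) := fun n =>
    ∑ γ ∈ sΓ, c (γ, n) • expLp B (γ : EuclideanSpace ℝ (Fin m)) with hvdef
  set w : ℤ → Lp ℂ 2 (volume.restrict S) := fun n =>
    ∑ γ ∈ sΓ, c (γ, n) • expLpProd S (γ : EuclideanSpace ℝ (Fin m)) n with hwdef
  have hV : ∑ q ∈ sΓ ×ˢ sN, c q • expLpProd S (q.1 : EuclideanSpace ℝ (Fin m)) q.2
      = ∑ n ∈ sN, w n := by
    rw [Finset.sum_product_right]
  have hww : ∀ n k : ℤ, (inner ℂ (w n) (w k) : ℂ) =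
      if n = k then (inner ℂ (v n) (v n) : ℂ) else 0 := by
    intro n k
    rw [hwdef, hvdef]
    simp only [sum_inner, inner_sum, inner_smul_left, inner_smul_right]
    by_cases hnk : n = k
    · subst hnk
      rw [if_pos rfl]
      refine Finset.sum_congr rfl fun γ _ => ?_
      congr 1
      refine Finset.sum_congr rfl fun γ' _ => ?_
      rw [inner_expLpProd hcyl, if_pos rfl]
    · rw [if_neg hnk]
      refine Finset.sum_eq_zero fun γ _ => ?_
      have hz : (∑ γ' ∈ sΓ, (starRingEnd ℂ) (c (γ', n)) *
          (inner ℂ (expLpProd S (↑γ' : EuclideanSpace ℝ (Fin m)) n)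
            (expLpProd S (↑γ : EuclideanSpace ℝ (Fin m)) k) : ℂ)) = 0 :=
        Finset.sum_eq_zero fun γ' _ => by rw [inner_expLpProd hcyl, if_neg hnk, mul_zero]
      rw [hz, mul_zero]
  have hVV : (inner ℂ (∑ n ∈ sN, w n) (∑ n ∈ sN, w n) : ℂ)
      = ((∑ n ∈ sN, ‖v n‖ ^ 2 : ℝ) : ℂ) := by
    rw [sum_inner, Complex.ofReal_sum]
    refine Finset.sum_congr rfl fun n hn => ?_
    rw [inner_sum]
    calc (∑ k ∈ sN, (inner ℂ (w n) (w k) : ℂ))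
        = ∑ k ∈ sN, if n = k then (inner ℂ (v n) (v n) : ℂ) else 0 :=
          Finset.sum_congr rfl fun k _ => hww n k
      _ = if n ∈ sN then (inner ℂ (v n) (v n) : ℂ) else 0 := Finset.sum_ite_eq sN n _
      _ = (inner ℂ (v n) (v n) : ℂ) := by rw [if_pos hn]
      _ = ((‖v n‖ ^ 2 : ℝ) : ℂ) := inner_self_complex (v n)
  have hnormV : ‖∑ q ∈ sΓ ×ˢ sN, c q • expLpProd S (q.1 : EuclideanSpace ℝ (Fin m)) q.2‖ ^ 2
      = ∑ n ∈ sN, ‖v n‖ ^ 2 := by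
    rw [hV]; exact norm_sq_eq_of_inner_eq hVV
  rw [hnormV, Finset.sum_product_right, Finset.mul_sum]
  refine Finset.sum_le_sum fun n _ => ?_
  exact hA sΓ (fun γ => c (γ, n))
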